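/- Let p be a prime, R a commutative ring of characteristic p, and t : ℕ → R a sequence. Let N be the Newton sequence of t. Then for every n ≥ 1 one has N(p·n) = (N(n))^p. -/

import Mathlib

/-- The Newton sequence of a sequence `t : ℕ → R`:
`N 0 = 0`, `N 1 = t 1`, and for `n ≥ 2`,
`N n = (∑_{k=1}^{n-1} (-1)^(k-1) * t k * N (n-k)) + (-1)^(n-1) * n * t n`. -/
noncomputable def newton {R : Type*} [CommRing R] (t : ℕ → R) : ℕ → R
  | 0 => 0
  | 1 => t 1
  | n + 2 =>
      (∑ k ∈ (Finset.Icc 1 (n + 1)).attach,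
        (-1 : R) ^ ((k : ℕ) - 1) * t (k : ℕ) * newton t (n + 2 - (k : ℕ)))
      + (-1 : R) ^ (n + 1) * ((n + 2 : ℕ) : R) * t (n + 2)
decreasing_by
  have hk := k.2
  simp only [Finset.mem_Icc] at hk
  omega

/-- Naturality of the Newton sequence in the ring. -/
lemma newton_map_aux {R S : Type*} [CommRing R] [CommRing S] (f : R →+* S) (t : ℕ → R) :
    ∀ n, f (newton t n) = newton (fun k => f (t k)) n := by
  intro n
  induction n using Nat.strong_induction_on with
  | _ n ih =>
    match n with
    | 0 => simp [newton]
    | 1 => simp [newton]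
    | n + 2 =>
      rw [newton, newton]
      simp only [map_add, map_sum, map_mul, map_pow, map_neg, map_one, map_natCast]
      congr 1
      refine Finset.sum_congr rfl fun k _ => ?_
      have hk := k.2
      simp only [Finset.mem_Icc] at hk
      rw [ih _ (by omega)]

/-- `newton t n` only depends on `t k` for `1 ≤ k ≤ n`. -/
lemma newton_congr_aux {R : Type*} [CommRing R] (t s : ℕ → R) :
    ∀ n, (∀ k, 1 ≤ k → k ≤ n → t k = s k) → newton t n = newton s n := by
  intro n
  induction n using Nat.strong_induction_on with
  | _ n ih =>
    match n with
    | 0 => intro _; simp [newton]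
    | 1 => intro h; simp [newton, h 1 le_rfl le_rfl]
    | n + 2 =>
      intro h
      rw [newton, newton]
      rw [h (n + 2) (by omega) le_rfl]
      congr 1
      refine Finset.sum_congr rfl fun k _ => ?_
      have hk := k.2
      simp only [Finset.mem_Icc] at hk
      rw [h k hk.1 (by omega), ih _ (by omega) (fun j hj1 hj2 => h j hj1 (by omega))]

open MvPolynomial in
lemma esymm_eq_zero_of_card_lt_aux (σ : Type*) [Fintype σ] (R : Type*) [CommRing R] {k : ℕ}
    (h : Fintype.card σ < k) : esymm σ R k = 0 := by
  rw [esymm, Finset.powersetCard_eq_empty.2 (by simpa using h), Finset.sum_empty]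

open MvPolynomial in
/-- Newton's identities: the Newton sequence of the elementary symmetric polynomials
is the sequence of power sums. -/
lemma newton_esymm_aux (σ : Type*) [Fintype σ] [DecidableEq σ] (R : Type*) [CommRing R] :
    ∀ n, 1 ≤ n → newton (fun k => esymm σ R k) n = psum σ R n := by
  intro n
  induction n using Nat.strong_induction_on with
  | _ n ih =>
    match n with
    | 0 => omega
    | 1 => intro _; rw [newton, psum_one, esymm_one]
    | n + 2 =>
      intro _
      rw [newton, psum_eq_mul_esymm_sub_sum σ R (n + 2) (by omega)]
      rw [Finset.sum_attach (Finset.Icc 1 (n + 1))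
        (fun k => (-1 : MvPolynomial σ R) ^ (k - 1) * esymm σ R k *
          newton (fun k => esymm σ R k) (n + 2 - k))]
      have hsum : ∑ k ∈ Finset.Icc 1 (n + 1),
          (-1 : MvPolynomial σ R) ^ (k - 1) * esymm σ R k *
            newton (fun k => esymm σ R k) (n + 2 - k)
          = ∑ a ∈ Finset.HasAntidiagonal.antidiagonal (n + 2) with a.1 ∈ Set.Ioo 0 (n + 2),
            -((-1 : MvPolynomial σ R) ^ a.1 * esymm σ R a.1 * psum σ R a.2) := by
        refine Finset.sum_nbij' (i := fun k => (k, n + 2 - k)) (j := fun a => a.1)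
          ?_ ?_ ?_ ?_ ?_
        · intro k hk
          simp only [Finset.mem_Icc] at hk
          simp only [Finset.mem_filter, Finset.HasAntidiagonal.mem_antidiagonal, Set.mem_Ioo]
          omega
        · intro a ha
          simp only [Finset.mem_filter, Finset.HasAntidiagonal.mem_antidiagonal, Set.mem_Ioo] at ha
          simp only [Finset.mem_Icc]
          omega
        · intro k hk; rfl
        · intro a ha
          simp only [Finset.mem_filter, Finset.HasAntidiagonal.mem_antidiagonal, Set.mem_Ioo] at ha
          ext
          · simp
          · simp; omega
        · intro k hk
          simp only [Finset.mem_Icc] at hk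
          rw [ih (n + 2 - k) (by omega) (by omega)]
          have : (-1 : MvPolynomial σ R) ^ k = (-1) ^ (k - 1) * (-1) := by
            rw [← pow_succ]; congr 1; omega
          rw [this]; ring
      rw [hsum, Finset.sum_neg_distrib]
      have : ((-1 : MvPolynomial σ R)) ^ (n + 2 + 1) = (-1) ^ (n + 1) := by
        rw [show n + 2 + 1 = n + 1 + 2 from rfl, pow_succ, pow_succ]; ring
      rw [this]
      ring

/-- If `R` is a commutative ring of characteristic `p` (a prime), then the Newton
sequence of any `t : ℕ → R` satisfies `N (p * n) = (N n) ^ p` for all `n ≥ 1`. -/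
theorem newton_mul_prime_eq_pow {p : ℕ} (hp : p.Prime) {R : Type*} [CommRing R]
    [CharP R p] (t : ℕ → R) :
    ∀ n : ℕ, 1 ≤ n → newton t (p * n) = (newton t n) ^ p := by
  intro n hn
  haveI : Fact p.Prime := ⟨hp⟩
  set M := p * n with hM
  have hpM : 1 ≤ M := Nat.one_le_iff_ne_zero.2 (Nat.mul_ne_zero hp.pos.ne' (by omega))
  have hnM : n ≤ M := Nat.le_mul_of_pos_left n hp.pos
  -- the universal ring
  set U := MvPolynomial (Fin M) (ZMod p) with hU
  set tU : ℕ → U := fun k => if hk : k - 1 < M then MvPolynomial.X ⟨k - 1, hk⟩ else 0 with htU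
  -- the injective map sending `X i` to `esymm (i+1)`
  set φ : U →+* MvPolynomial (Fin M) (ZMod p) :=
    ((MvPolynomial.symmetricSubalgebra (Fin M) (ZMod p)).val.comp
      (MvPolynomial.esymmAlgHom (Fin M) (ZMod p) M)).toRingHom with hφ
  have hinj : Function.Injective φ := by
    have h1 := MvPolynomial.esymmAlgHom_fin_injective (ZMod p) (le_refl M)
    exact fun a b hab => h1 (Subtype.val_injective hab)
  have hφX : ∀ i : Fin M, φ (MvPolynomial.X i) =
      MvPolynomial.esymm (Fin M) (ZMod p) ((i : ℕ) + 1) := by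
    intro i
    simp only [hφ, AlgHom.toRingHom_eq_coe, RingHom.coe_coe, AlgHom.coe_comp,
      Function.comp_apply]
    rw [MvPolynomial.esymmAlgHom, MvPolynomial.aeval_X]
    rfl
  have hcomp : ∀ k, 1 ≤ k → φ (tU k) = MvPolynomial.esymm (Fin M) (ZMod p) k := by
    intro k hk
    by_cases hkM : k - 1 < M
    · rw [htU]
      simp only [dif_pos hkM]
      rw [hφX]
      congr 1
      simp only [Fin.val_mk]
      omega
    · rw [htU]
      simp only [dif_neg hkM]
      rw [esymm_eq_zero_of_card_lt_aux (Fin M) (ZMod p) (k := k) (by simp; omega), map_zero]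
  -- the universal identity
  have hUniv : newton tU M = (newton tU n) ^ p := by
    apply hinj
    rw [map_pow, newton_map_aux φ tU M, newton_map_aux φ tU n]
    rw [newton_congr_aux _ _ M (fun k hk _ => hcomp k hk),
        newton_congr_aux _ _ n (fun k hk _ => hcomp k hk)]
    rw [newton_esymm_aux (Fin M) (ZMod p) M hpM, newton_esymm_aux (Fin M) (ZMod p) n hn]
    rw [hM, MvPolynomial.psum, MvPolynomial.psum, sum_pow_char]
    refine Finset.sum_congr rfl fun i _ => ?_
    rw [← pow_mul]
    congr 1
    exact Nat.mul_comm p n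
  -- specialize to `R`
  set f : U →+* R :=
    MvPolynomial.eval₂Hom (ZMod.castHom (dvd_refl p) R) (fun i : Fin M => t ((i : ℕ) + 1))
    with hf
  have hft : ∀ k, 1 ≤ k → k ≤ M → f (tU k) = t k := by
    intro k hk hkM
    rw [htU]
    simp only [dif_pos (show k - 1 < M by omega)]
    rw [hf, MvPolynomial.eval₂Hom_X']
    congr 1
    simp only [Fin.val_mk]
    omega
  calc newton t M = f (newton tU M) := by
        rw [newton_map_aux f tU M]
        exact newton_congr_aux _ _ M (fun k hk hkM => (hft k hk hkM).symm)
    _ = (f (newton tU n)) ^ p := by rw [hUniv, map_pow]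
    _ = (newton t n) ^ p := by
        rw [newton_map_aux f tU n]
        congr 1
        exact newton_congr_aux _ _ n (fun k hk hkn => hft k hk (hkn.trans hnM))
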